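/- Let q be a prime, and let n, t be positive integers with 2t ≤ n. Set P = 2t·⌈log_q n⌉. Then there exists a matrix D ∈ (ZMod q)^{P×n} such that every vector k ∈ (ZMod q)^n of Hamming weight at most t can be exactly recovered from Dk; equivalently, the map k ↦ Dk is injective on the set {k ∈ (ZMod q)^n : ‖k‖₀ ≤ t}, i.e., any nonzero k with ‖k‖₀ ≤ 2t satisfies Dk ≠ 0. -/

import Mathlib

open Finset

/-- Auxiliary: if `c` has at most `w` nonzero coordinates, the points `x i` are
distinct, and all power sums `∑ i, c i * x i ^ j` for `j < w` vanish, then `c = 0`. -/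
lemma aux_vandermonde {F : Type*} [Field F] [DecidableEq F] {n w : ℕ} {x : Fin n → F}
    (hx : Function.Injective x) {c : Fin n → F}
    (hw : (Finset.univ.filter (fun i => c i ≠ 0)).card ≤ w)
    (h : ∀ j : Fin w, ∑ i, c i * x i ^ (j : ℕ) = 0) : c = 0 := by
  classical
  set s := Finset.univ.filter (fun i => c i ≠ 0) with hs
  set e := s.equivFin with he
  set v : Fin s.card → F := fun a => x (e.symm a).1 with hv
  set c' : Fin s.card → F := fun a => c (e.symm a).1 with hc'
  have hvinj : Function.Injective v := by
    intro a b hab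
    exact e.symm.injective (Subtype.ext (hx hab))
  have hsum : ∀ j : Fin s.card, ∑ a, c' a * v a ^ (j : ℕ) = 0 := by
    intro j
    have h1 : ∑ a : Fin s.card, c' a * v a ^ (j : ℕ)
        = ∑ i : s, c i.1 * x i.1 ^ (j : ℕ) :=
      Equiv.sum_comp e.symm (fun i : s => c i.1 * x i.1 ^ (j : ℕ))
    have h2 : ∑ i : s, c i.1 * x i.1 ^ (j : ℕ)
        = ∑ i ∈ s, c i * x i ^ (j : ℕ) := Finset.sum_coe_sort s (fun i => c i * x i ^ (j : ℕ))
    have h3 : ∑ i ∈ s, c i * x i ^ (j : ℕ) = ∑ i, c i * x i ^ (j : ℕ) := by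
      refine Finset.sum_filter_of_ne ?_
      intro i _ hne hci
      exact hne (by rw [hci, zero_mul])
    rw [h1, h2, h3]
    exact h ⟨j, lt_of_lt_of_le j.2 hw⟩
  have hz : c' = 0 := Matrix.eq_zero_of_forall_pow_sum_mul_pow_eq_zero hvinj hsum
  funext i
  show c i = 0
  by_contra hci
  have hi : i ∈ s := by simp [hs, hci]
  have : c' (e ⟨i, hi⟩) = 0 := by rw [hz]; rfl
  rw [hc'] at this
  simp only [Equiv.symm_apply_apply] at this
  exact hci this

theorem exists_syndrome_matrix_low_weight_recovery
    (q n t : ℕ) (hq : q.Prime) (ht : 1 ≤ t) (hn : 2 * t ≤ n) :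
    ∃ D : Matrix (Fin (2 * t * Nat.clog q n)) (Fin n) (ZMod q),
      Set.InjOn D.mulVec
        {k : Fin n → ZMod q | (Finset.univ.filter (fun i => k i ≠ 0)).card ≤ t} ∧
      ∀ k : Fin n → ZMod q, k ≠ 0 →
        (Finset.univ.filter (fun i => k i ≠ 0)).card ≤ 2 * t → D.mulVec k ≠ 0 := by
  classical
  haveI : Fact q.Prime := ⟨hq⟩
  set m := Nat.clog q n with hm
  have hn2 : 2 ≤ n := le_trans (by omega) hn
  have hm0 : m ≠ 0 := by
    have := Nat.clog_pos hq.one_lt (by omega : 1 < n)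
    omega
  have hncard : Nat.card (GaloisField q m) = q ^ m := GaloisField.card q m hm0
  haveI : Finite (GaloisField q m) := by
    exact (Nat.card_pos_iff.mp (by rw [hncard]; exact pow_pos hq.pos m)).2
  haveI : Fintype (GaloisField q m) := Fintype.ofFinite _
  have hcard : Fintype.card (GaloisField q m) = q ^ m := by
    rw [← Nat.card_eq_fintype_card]; exact hncard
  have hle : n ≤ q ^ m := Nat.le_pow_clog hq.one_lt n
  obtain ⟨x⟩ : Nonempty (Fin n ↪ GaloisField q m) :=
    Function.Embedding.nonempty_of_card_le (by rw [hcard, Fintype.card_fin]; exact hle)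
  have hfr : Module.finrank (ZMod q) (GaloisField q m) = m := GaloisField.finrank q hm0
  let b : Module.Basis (Fin m) (ZMod q) (GaloisField q m) :=
    (Module.finBasis (ZMod q) (GaloisField q m)).reindex (finCongr hfr)
  -- the syndrome matrix
  let D : Matrix (Fin (2 * t * m)) (Fin n) (ZMod q) := fun r i =>
    b.repr (x i ^ ((finProdFinEquiv.symm r).1 : ℕ)) (finProdFinEquiv.symm r).2
  -- key computation: rows of D ⬝ k are coordinates of the field syndromes
  have hsyn : ∀ (k : Fin n → ZMod q) (r : Fin (2 * t * m)),
      D.mulVec k r = b.repr (∑ i, k i • x i ^ ((finProdFinEquiv.symm r).1 : ℕ))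
        (finProdFinEquiv.symm r).2 := by
    intro k r
    rw [map_sum, Finsupp.finset_sum_apply]
    simp only [Matrix.mulVec, dotProduct, D, map_smul, Finsupp.smul_apply, smul_eq_mul]
    exact Finset.sum_congr rfl fun i _ => mul_comm _ _
  -- main property
  have main : ∀ k : Fin n → ZMod q, k ≠ 0 →
      (Finset.univ.filter (fun i => k i ≠ 0)).card ≤ 2 * t → D.mulVec k ≠ 0 := by
    intro k hk hwt hDk
    set c : Fin n → GaloisField q m := fun i => algebraMap (ZMod q) (GaloisField q m) (k i) with hc
    have hcsupp : (Finset.univ.filter (fun i => c i ≠ 0)).card ≤ 2 * t := by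
      refine le_trans (Finset.card_le_card ?_) hwt
      intro i hi
      simp only [Finset.mem_filter, Finset.mem_univ, true_and] at hi ⊢
      intro h0
      exact hi (by rw [hc]; simp [h0])
    have hsz : ∀ j : Fin (2 * t), ∑ i, c i * x i ^ (j : ℕ) = 0 := by
      intro j
      have hrep : b.repr (∑ i, k i • x i ^ (j : ℕ)) = 0 := by
        ext l
        have := congrFun hDk (finProdFinEquiv (j, l))
        rw [hsyn k (finProdFinEquiv (j, l))] at this
        simpa using this
      have : (∑ i, k i • x i ^ (j : ℕ)) = 0 := by
        have := congrArg b.repr.symm hrep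
        simpa using this
      rw [← this]
      refine Finset.sum_congr rfl fun i _ => ?_
      rw [hc, Algebra.smul_def]
    have hc0 : c = 0 := aux_vandermonde x.injective hcsupp hsz
    apply hk
    funext i
    have : algebraMap (ZMod q) (GaloisField q m) (k i) = 0 := congrFun hc0 i
    exact (algebraMap (ZMod q) (GaloisField q m)).injective (by simpa using this)
  refine ⟨D, ?_, main⟩
  intro k₁ hk₁ k₂ hk₂ hEq
  by_contra hne
  have hdiff : D.mulVec (k₁ - k₂) = 0 := by
    rw [Matrix.mulVec_sub, hEq, sub_self]
  refine main (k₁ - k₂) (sub_ne_zero_of_ne hne) ?_ hdiff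
  calc (Finset.univ.filter (fun i => (k₁ - k₂) i ≠ 0)).card
      ≤ ((Finset.univ.filter (fun i => k₁ i ≠ 0)) ∪
         (Finset.univ.filter (fun i => k₂ i ≠ 0))).card := by
        refine Finset.card_le_card ?_
        intro i hi
        simp only [Finset.mem_filter, Finset.mem_union, Finset.mem_univ, true_and,
          Pi.sub_apply] at hi ⊢
        by_contra h
        push_neg at h
        exact hi (by rw [h.1, h.2, sub_zero])
    _ ≤ _ + _ := Finset.card_union_le _ _
    _ ≤ 2 * t := by have := hk₁; have := hk₂; simp only [Set.mem_setOf_eq] at *; omega
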